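/- Let (Ω, ℱ, P) be a probability space, Z ≥ 0 an integrable random variable with continuous distribution function L (i.e., Z is atomless), and E ∈ ℱ with p = P(E). Then E[Z·1_{L(Z) < p}] ≤ E[Z·1_E]. -/

import Mathlib

open MeasureTheory

theorem stmt17 {Ω : Type*} [MeasurableSpace Ω] (μ : Measure Ω) [IsProbabilityMeasure μ]
    (Z : Ω → ℝ) (hZmeas : Measurable Z) (hZnonneg : ∀ ω, 0 ≤ Z ω)
    (hZint : Integrable Z μ)
    (L : ℝ → ℝ) (hL : ∀ z : ℝ, L z = (μ {ω | Z ω ≤ z}).toReal)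
    (hLcont : Continuous L)
    (E : Set Ω) (hE : MeasurableSet E)
    (p : ℝ) (hp : p = (μ E).toReal) :
    ∫ ω in {ω | L (Z ω) < p}, Z ω ∂μ ≤ ∫ ω in E, Z ω ∂μ := by
  set A : Set Ω := {ω | L (Z ω) < p} with hAdef
  have hLmono : Monotone L := by
    intro a b hab
    rw [hL, hL]
    exact ENNReal.toReal_mono (measure_ne_top _ _)
      (measure_mono fun ω h => le_trans h hab)
  have hAmeas : MeasurableSet A :=
    (hLcont.measurable.comp hZmeas) measurableSet_Iio
  by_cases hp1 : 1 ≤ p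
  · -- μ E = 1, so E is a.e. univ
    have hE1 : μ E = 1 := by
      refine le_antisymm prob_le_one ?_
      have : (1 : ℝ) ≤ (μ E).toReal := hp ▸ hp1
      rw [← ENNReal.toReal_one] at this
      exact (ENNReal.toReal_le_toReal ENNReal.one_ne_top (measure_ne_top _ _)).1 this
    have hEc : μ Eᶜ = 0 := by
      rw [measure_compl hE (measure_ne_top _ _), hE1, measure_univ, tsub_self]
    have hEuniv : E =ᵐ[μ] Set.univ := ae_eq_univ.2 hEc
    calc ∫ ω in A, Z ω ∂μ ≤ ∫ ω, Z ω ∂μ :=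
          setIntegral_le_integral hZint (Filter.Eventually.of_forall hZnonneg)
      _ = ∫ ω in E, Z ω ∂μ := by
          rw [Measure.restrict_congr_set hEuniv, Measure.restrict_univ]
  push_neg at hp1
  by_cases hAne : A.Nonempty
  swap
  · rw [Set.not_nonempty_iff_eq_empty] at hAne
    rw [hAne]
    simp only [Measure.restrict_empty, integral_zero_measure]
    exact setIntegral_nonneg hE fun ω _ => hZnonneg ω
  obtain ⟨ω₀, hω₀⟩ := hAne
  set S : Set ℝ := {z | L z < p} with hSdef
  have hSne : S.Nonempty := ⟨Z ω₀, hω₀⟩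
  -- S is bounded above since L → 1 > p
  have hLtend : Filter.Tendsto (fun n : ℕ => L n) Filter.atTop (nhds 1) := by
    have hmono : Monotone (fun n : ℕ => {ω | Z ω ≤ (n : ℝ)}) := by
      intro a b hab ω hω
      simp only [Set.mem_setOf_eq] at hω ⊢
      exact le_trans hω (Nat.cast_le.2 hab)
    have hU : ⋃ n : ℕ, {ω | Z ω ≤ (n : ℝ)} = Set.univ := by
      ext ω
      simp only [Set.mem_iUnion, Set.mem_setOf_eq, Set.mem_univ, iff_true]
      obtain ⟨n, hn⟩ := exists_nat_ge (Z ω)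
      exact ⟨n, hn⟩
    have h1 : Filter.Tendsto (fun n : ℕ => μ {ω | Z ω ≤ (n : ℝ)}) Filter.atTop
        (nhds (μ (⋃ n : ℕ, {ω | Z ω ≤ (n : ℝ)}))) :=
      tendsto_measure_iUnion_atTop hmono
    rw [hU, measure_univ] at h1
    have h2 := (ENNReal.tendsto_toReal ENNReal.one_ne_top).comp h1
    simp only [Function.comp_def, ENNReal.toReal_one] at h2
    convert h2 using 2 with n
    exact hL _
  have hSbdd : BddAbove S := by
    have : ∀ᶠ n : ℕ in Filter.atTop, p < L n :=
      hLtend.eventually_const_lt hp1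
    obtain ⟨n, hn⟩ := this.exists
    refine ⟨(n : ℝ), fun s hs => ?_⟩
    by_contra h
    push_neg at h
    exact absurd (lt_trans hn (lt_of_le_of_lt (hLmono h.le) hs)) (lt_irrefl p)
  set t : ℝ := sSup S with htdef
  have hSopen : IsOpen S := hLcont.isOpen_preimage _ isOpen_Iio
  have hta : ∀ ω ∈ A, Z ω < t := by
    intro ω hω
    obtain ⟨ε, hε, hball⟩ := Metric.isOpen_iff.1 hSopen (Z ω) hω
    have hmem : Z ω + ε / 2 ∈ S := by
      apply hball
      rw [Metric.mem_ball, Real.dist_eq, add_sub_cancel_left, abs_of_pos (half_pos hε)]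
      linarith
    calc Z ω < Z ω + ε / 2 := by linarith
      _ ≤ t := le_csSup hSbdd hmem
  have htb : ∀ ω, ω ∉ A → t ≤ Z ω := by
    intro ω hω
    refine csSup_le hSne fun s hs => ?_
    by_contra h
    push_neg at h
    simp only [hAdef, Set.mem_setOf_eq, not_lt] at hω
    exact absurd (lt_of_le_of_lt (le_trans hω (hLmono h.le)) hs) (lt_irrefl _)
  have ht0 : 0 ≤ t := le_trans (hZnonneg ω₀) (hta ω₀ hω₀).le
  -- L t ≤ p
  have hLt : L t ≤ p := by
    have hall : ∀ s ∈ Set.Iio t, L s ≤ p := by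
      intro s hs
      obtain ⟨s', hs'S, hss'⟩ := exists_lt_of_lt_csSup hSne hs
      exact (hLmono hss'.le).trans hs'S.le
    exact le_of_tendsto ((hLcont.tendsto t).mono_left nhdsWithin_le_nhds)
      (eventually_nhdsWithin_of_forall hall)
  -- μ A ≤ μ E
  have hAE : μ A ≤ μ E := by
    have h1 : μ A ≤ μ {ω | Z ω ≤ t} :=
      measure_mono fun ω hω => (hta ω hω).le
    have h2 : (μ A).toReal ≤ (μ E).toReal := by
      refine le_trans (le_trans ?_ ((hL t).symm ▸ hLt)) (le_of_eq hp)
      exact ENNReal.toReal_mono (measure_ne_top _ _) h1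
    exact (ENNReal.toReal_le_toReal (measure_ne_top _ _) (measure_ne_top _ _)).1 h2
  have hdiff : μ (A \ E) ≤ μ (E \ A) := by
    have h1 : μ (A ∩ E) + μ (A \ E) = μ A := measure_inter_add_diff A hE
    have h2 : μ (A ∩ E) + μ (E \ A) = μ E := by
      rw [Set.inter_comm]; exact measure_inter_add_diff E hAmeas
    rw [← ENNReal.add_le_add_iff_left (measure_ne_top μ (A ∩ E)), h1, h2]
    exact hAE
  have hdiffR : (μ (A \ E)).toReal ≤ (μ (E \ A)).toReal :=
    ENNReal.toReal_mono (measure_ne_top _ _) hdiff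
  -- key inequality on the differences
  have hconst1 : IntegrableOn (fun _ : Ω => t) (A \ E) μ := integrableOn_const (measure_ne_top _ _) enorm_ne_top
  have hconst2 : IntegrableOn (fun _ : Ω => t) (E \ A) μ := integrableOn_const (measure_ne_top _ _) enorm_ne_top
  have key : ∫ ω in A \ E, Z ω ∂μ ≤ ∫ ω in E \ A, Z ω ∂μ := by
    calc ∫ ω in A \ E, Z ω ∂μ ≤ ∫ _ in A \ E, t ∂μ :=
          setIntegral_mono_on hZint.integrableOn hconst1 (hAmeas.diff hE)
            (fun ω hω => (hta ω hω.1).le)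
      _ = (μ (A \ E)).toReal * t := by rw [setIntegral_const, smul_eq_mul]; rfl
      _ ≤ (μ (E \ A)).toReal * t := mul_le_mul_of_nonneg_right hdiffR ht0
      _ = ∫ _ in E \ A, t ∂μ := by rw [setIntegral_const, smul_eq_mul]; rfl
      _ ≤ ∫ ω in E \ A, Z ω ∂μ :=
          setIntegral_mono_on hconst2 hZint.integrableOn (hE.diff hAmeas)
            (fun ω hω => htb ω hω.2)
  have e1 : ∫ ω in A ∩ E, Z ω ∂μ + ∫ ω in A \ E, Z ω ∂μ = ∫ ω in A, Z ω ∂μ :=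
    integral_inter_add_diff hE hZint.integrableOn
  have e2 : ∫ ω in A ∩ E, Z ω ∂μ + ∫ ω in E \ A, Z ω ∂μ = ∫ ω in E, Z ω ∂μ := by
    rw [Set.inter_comm]; exact integral_inter_add_diff hAmeas hZint.integrableOn
  rw [← e1, ← e2]
  exact add_le_add_right key _
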